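/- There is an absolute constant C such that for every prime power q and every positive integer k, the sum over all monic irreducible polynomials p ∈ F_q[t] of degree at most k of (deg p)/q^{deg p} satisfies |k − Σ_{deg p ≤ k} (deg p)/|p|| ≤ C·q^{−1/2}, where |p| = q^{deg p}. -/

import Mathlib

open Polynomial

/-- `q^d - 1 ∣ q^n - 1` implies `d ∣ n` for `q ≥ 2`. -/
lemma aux_dvd_of_pow_sub_one_dvd {q d n : ℕ} (hq : 2 ≤ q) (hd : 0 < d)
    (h : q ^ d - 1 ∣ q ^ n - 1) : d ∣ n := by
  have hq1 : 1 ≤ q := by omega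
  set r := n % d with hr
  have hrd : r < d := Nat.mod_lt _ hd
  have hrn : r ≤ n := Nat.mod_le _ _
  have h1 : q ^ d - 1 ∣ q ^ n - q ^ r := by
    have : q ^ n - q ^ r = q ^ r * (q ^ (d * (n / d)) - 1) := by
      have hnd : r + d * (n / d) = n := Nat.mod_add_div n d
      rw [Nat.mul_sub, mul_one, ← pow_add, hnd]
    rw [this]
    exact Dvd.dvd.mul_left (Nat.pow_sub_one_dvd_pow_sub_one q (Dvd.intro _ rfl)) _
  have h2 : q ^ d - 1 ∣ q ^ r - 1 := by
    have e : q ^ r - 1 = (q ^ n - 1) - (q ^ n - q ^ r) := by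
      have h3 : 1 ≤ q ^ r := Nat.one_le_pow _ _ (by omega)
      have h4 : q ^ r ≤ q ^ n := Nat.pow_le_pow_right hq1 hrn
      omega
    rw [e]; exact Nat.dvd_sub h h1
  have hlt : q ^ r - 1 < q ^ d - 1 := by
    have : q ^ r < q ^ d := Nat.pow_lt_pow_right (by omega) hrd
    have h3 : 1 ≤ q ^ r := Nat.one_le_pow _ _ (by omega)
    omega
  have h0 : q ^ r - 1 = 0 := Nat.eq_zero_of_dvd_of_lt h2 hlt
  have : q ^ r ≤ 1 := by omega
  have : r = 0 := by
    by_contra hr0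
    have h5 : q ^ 1 ≤ q ^ r := Nat.pow_le_pow_right (by omega) (by omega)
    simp only [pow_one] at h5
    omega
  exact Nat.dvd_of_mod_eq_zero this

section FF
variable {Fq : Type} [Field Fq] [Fintype Fq]

local notation "q" => Fintype.card Fq

lemma aux_card_adjoinRoot (p : Polynomial Fq) (hp : Irreducible p) :
    Nat.card (AdjoinRoot p) = q ^ p.natDegree := by
  haveI := Fact.mk hp
  let pb := AdjoinRoot.powerBasis (hp.ne_zero)
  haveI : Module.Finite Fq (AdjoinRoot p) := Module.Finite.of_basis pb.basis
  haveI : Finite (AdjoinRoot p) := Module.finite_of_finite Fq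
  haveI : Fintype (AdjoinRoot p) := Fintype.ofFinite _
  rw [Nat.card_eq_fintype_card, Module.card_fintype pb.basis]
  simp [pb, AdjoinRoot.powerBasis]

/-- (A1): if `deg p ∣ n` then `p ∣ X^(q^n) - X`. -/
lemma aux_dvd_X_pow_sub (p : Polynomial Fq) (hp : Irreducible p) {n : ℕ}
    (hdvd : p.natDegree ∣ n) : p ∣ X ^ q ^ n - X := by
  haveI := Fact.mk hp
  let pb := AdjoinRoot.powerBasis (hp.ne_zero)
  haveI : Module.Finite Fq (AdjoinRoot p) := Module.Finite.of_basis pb.basis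
  haveI : Finite (AdjoinRoot p) := Module.finite_of_finite Fq
  haveI : Fintype (AdjoinRoot p) := Fintype.ofFinite _
  have hcard : Fintype.card (AdjoinRoot p) = q ^ p.natDegree := by
    rw [← Nat.card_eq_fintype_card]; exact aux_card_adjoinRoot p hp
  obtain ⟨m, rfl⟩ := hdvd
  rw [← AdjoinRoot.mk_eq_zero, map_sub, map_pow, AdjoinRoot.mk_X, sub_eq_zero,
    pow_mul, ← hcard]
  exact FiniteField.pow_card_pow m _

/-- (A2): if `p ∣ X^(q^n) - X` then `deg p ∣ n`. -/
lemma aux_natDegree_dvd (p : Polynomial Fq) (hp : Irreducible p) {n : ℕ} (hn : 0 < n)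
    (h : p ∣ X ^ q ^ n - X) : p.natDegree ∣ n := by
  haveI := Fact.mk hp
  let pb := AdjoinRoot.powerBasis (hp.ne_zero)
  haveI : Module.Finite Fq (AdjoinRoot p) := Module.Finite.of_basis pb.basis
  haveI : Finite (AdjoinRoot p) := Module.finite_of_finite Fq
  haveI : Fintype (AdjoinRoot p) := Fintype.ofFinite _
  set K := AdjoinRoot p with hK
  have hcard : Fintype.card K = q ^ p.natDegree := by
    rw [← Nat.card_eq_fintype_card]; exact aux_card_adjoinRoot p hp
  have hroot : AdjoinRoot.root p ^ q ^ n = AdjoinRoot.root p := by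
    have h2 := AdjoinRoot.mk_eq_zero.mpr h
    rwa [map_sub, map_pow, AdjoinRoot.mk_X, sub_eq_zero] at h2
  obtain ⟨ch, hch⟩ := CharP.exists Fq
  haveI := hch
  have hchp : ch.Prime := CharP.char_is_prime Fq ch
  haveI := Fact.mk hchp
  haveI : CharP K ch := charP_of_injective_algebraMap (algebraMap Fq K).injective ch
  obtain ⟨s, -, hq⟩ := FiniteField.card Fq ch
  have hqn : q ^ n = ch ^ ((s : ℕ) * n) := by rw [hq, ← pow_mul]
  have hall : ∀ x : K, x ^ q ^ n = x := by
    intro x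
    have hx : x ∈ (⊤ : Subalgebra Fq K) := trivial
    rw [← AdjoinRoot.adjoinRoot_eq_top (f := p)] at hx
    induction hx using Algebra.adjoin_induction with
    | mem y hy =>
      rcases Set.mem_singleton_iff.mp hy with rfl
      exact hroot
    | algebraMap r =>
      rw [← map_pow, FiniteField.pow_card_pow]
    | add x y _ _ hx hy =>
      rw [hqn, add_pow_char_pow, ← hqn, hx, hy]
    | mul x y _ _ hx hy =>
      rw [mul_pow, hx, hy]
  obtain ⟨g, hg⟩ := IsCyclic.exists_generator (α := Kˣ)
  have horder : orderOf g = q ^ p.natDegree - 1 := by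
    rw [orderOf_eq_card_of_forall_mem_zpowers hg, Nat.card_units, Nat.card_eq_fintype_card, hcard]
  have hgpow : g ^ q ^ n = g := by
    ext
    rw [Units.val_pow_eq_pow_val]
    exact hall g
  have hg1 : g ^ (q ^ n - 1) = 1 := by
    have h3 : g ^ (q ^ n - 1) * g = 1 * g := by
      rw [← pow_succ, Nat.sub_add_cancel (Nat.one_le_pow _ _ Fintype.card_pos), hgpow, one_mul]
    exact mul_right_cancel h3
  have hdvd := orderOf_dvd_of_pow_eq_one hg1
  rw [horder] at hdvd
  exact aux_dvd_of_pow_sub_one_dvd Fintype.one_lt_card hp.natDegree_pos hdvd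

end FF

section Count
variable {Fq : Type} [Field Fq] [Fintype Fq]

local notation "q" => Fintype.card Fq

lemma aux_finite_natDegree_le (k : ℕ) : {p : Polynomial Fq | p.natDegree ≤ k}.Finite := by
  have hinj : Set.InjOn (fun p : Polynomial Fq => fun i : Fin (k + 1) => p.coeff i)
      {p | p.natDegree ≤ k} := by
    intro a ha b hb hab
    ext i
    by_cases hi : i ≤ k
    · exact congrFun hab ⟨i, by omega⟩
    · rw [coeff_eq_zero_of_natDegree_lt (lt_of_le_of_lt ha (by omega)),
        coeff_eq_zero_of_natDegree_lt (lt_of_le_of_lt hb (by omega))]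
  exact Set.Finite.of_finite_image (Set.toFinite _) hinj

end Count

/-- The finset of monic irreducible polynomials of degree `n` over `Fq`. -/
noncomputable def Mdeg (Fq : Type) [Field Fq] [Fintype Fq] (n : ℕ) : Finset (Polynomial Fq) :=
  have h : {p : Polynomial Fq | p.Monic ∧ Irreducible p ∧ p.natDegree = n} ⊆
      {p : Polynomial Fq | p.natDegree ≤ n} := fun p hp => le_of_eq hp.2.2
  ((aux_finite_natDegree_le n).subset h).toFinset

lemma mem_Mdeg {Fq : Type} [Field Fq] [Fintype Fq] {n : ℕ} {p : Polynomial Fq} :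
    p ∈ Mdeg Fq n ↔ p.Monic ∧ Irreducible p ∧ p.natDegree = n :=
  Set.Finite.mem_toFinset _

section Count2
variable {Fq : Type} [Field Fq] [Fintype Fq]

local notation "q" => Fintype.card Fq

lemma aux_pairwise_coprime {n : ℕ} :
    (↑(Mdeg Fq n) : Set (Polynomial Fq)).Pairwise (Function.onFun IsCoprime (id : Polynomial Fq → _)) := by
  intro a ha b hb hab
  simp only [Finset.mem_coe, mem_Mdeg] at ha hb
  refine ha.2.1.coprime_iff_not_dvd.mpr (fun hdvd => hab ?_)
  exact Polynomial.eq_of_monic_of_associated ha.1 hb.1 (ha.2.1.associated_of_dvd hb.2.1 hdvd)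

lemma aux_upper (n : ℕ) (hn : 0 < n) : n * (Mdeg Fq n).card ≤ q ^ n := by
  have hq2 : 1 < q ^ n := Nat.one_lt_pow hn.ne' Fintype.one_lt_card
  have hfd : (X ^ q ^ n - X : Polynomial Fq).natDegree = q ^ n :=
    FiniteField.X_pow_card_sub_X_natDegree_eq Fq hq2
  have hf0 : (X ^ q ^ n - X : Polynomial Fq) ≠ 0 :=
    FiniteField.X_pow_card_sub_X_ne_zero Fq hq2
  have hprod : (∏ p ∈ Mdeg Fq n, p) ∣ (X ^ q ^ n - X : Polynomial Fq) := by
    refine Finset.prod_dvd_of_coprime aux_pairwise_coprime (fun p hp => ?_)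
    rw [mem_Mdeg] at hp
    exact aux_dvd_X_pow_sub p hp.2.1 (hp.2.2 ▸ dvd_refl n)
  have hdeg := Polynomial.natDegree_le_of_dvd hprod hf0
  rw [Polynomial.natDegree_prod _ _ (fun p hp => (mem_Mdeg.mp hp).2.1.ne_zero)] at hdeg
  rw [hfd] at hdeg
  calc n * (Mdeg Fq n).card = ∑ p ∈ Mdeg Fq n, p.natDegree := by
        rw [Finset.sum_congr rfl (fun p hp => (mem_Mdeg.mp hp).2.2), Finset.sum_const,
          smul_eq_mul, mul_comm]
    _ ≤ q ^ n := hdeg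

lemma aux_lower (n : ℕ) (hn : 0 < n) :
    q ^ n ≤ ∑ d ∈ n.divisors, d * (Mdeg Fq d).card := by
  classical
  have hq2 : 1 < q ^ n := Nat.one_lt_pow hn.ne' Fintype.one_lt_card
  set f : Polynomial Fq := X ^ q ^ n - X with hf
  have hfd : f.natDegree = q ^ n := FiniteField.X_pow_card_sub_X_natDegree_eq Fq hq2
  have hf0 : f ≠ 0 := FiniteField.X_pow_card_sub_X_ne_zero Fq hq2
  -- separability / squarefreeness
  obtain ⟨ch, hch⟩ := CharP.exists Fq
  haveI := hch
  have hchp : ch.Prime := CharP.char_is_prime Fq ch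
  haveI := Fact.mk hchp
  obtain ⟨s, -, hqs⟩ := FiniteField.card Fq ch
  have hsep : Separable f := by
    refine galois_poly_separable ch (q ^ n) ?_
    exact (hqs ▸ dvd_pow_self ch s.ne_zero).trans (dvd_pow_self _ hn.ne')
  have hsqf : Squarefree f := hsep.squarefree
  -- normalized factors
  set F := UniqueFactorizationMonoid.normalizedFactors f with hF
  have hnodup : F.Nodup :=
    (UniqueFactorizationMonoid.squarefree_iff_nodup_normalizedFactors hf0).mp hsqf
  have hassoc := UniqueFactorizationMonoid.prod_normalizedFactors hf0
  have hprodnd : F.prod.natDegree = q ^ n := by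
    obtain ⟨u, hu⟩ := hassoc
    rw [← hfd, ← hu, Polynomial.natDegree_mul (fun h => hf0 (by rw [← hu, h, zero_mul]))
      (Units.ne_zero u)]
    rw [Polynomial.natDegree_eq_zero_of_isUnit u.isUnit, add_zero]
  have hF0 : (0 : Polynomial Fq) ∉ F := fun h =>
    (UniqueFactorizationMonoid.irreducible_of_normalized_factor _ h).ne_zero rfl
  have hsum : (F.map Polynomial.natDegree).sum = q ^ n := by
    rw [← Polynomial.natDegree_multiset_prod _ hF0, hprodnd]
  -- convert to finset sum
  have hTval : F.toFinset.val = F := by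
    rw [Multiset.toFinset_val, Multiset.dedup_eq_self.mpr hnodup]
  have hsum2 : ∑ r ∈ F.toFinset, r.natDegree = q ^ n := by
    rw [Finset.sum, hTval, hsum]
  -- subset of big union
  have hsub : F.toFinset ⊆ n.divisors.biUnion (Mdeg Fq) := by
    intro r hr
    rw [Multiset.mem_toFinset] at hr
    have hirr := UniqueFactorizationMonoid.irreducible_of_normalized_factor _ hr
    have hmon : r.Monic := by
      have := UniqueFactorizationMonoid.normalize_normalized_factor _ hr
      rw [← this]
      exact Polynomial.monic_normalize hirr.ne_zero
    have hdvd : r ∣ f := UniqueFactorizationMonoid.dvd_of_mem_normalizedFactors hr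
    have hddvd : r.natDegree ∣ n := aux_natDegree_dvd r hirr hn hdvd
    rw [Finset.mem_biUnion]
    exact ⟨r.natDegree, Nat.mem_divisors.mpr ⟨hddvd, hn.ne'⟩, mem_Mdeg.mpr ⟨hmon, hirr, rfl⟩⟩
  have hdisj : ∀ d ∈ n.divisors, ∀ e ∈ n.divisors, d ≠ e →
      Disjoint (Mdeg Fq d) (Mdeg Fq e) := by
    intro d _ e _ hde
    refine Finset.disjoint_left.mpr (fun p hp hp' => hde ?_)
    rw [← (mem_Mdeg.mp hp).2.2, ← (mem_Mdeg.mp hp').2.2]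
  calc q ^ n = ∑ r ∈ F.toFinset, r.natDegree := hsum2.symm
    _ ≤ ∑ r ∈ n.divisors.biUnion (Mdeg Fq), r.natDegree :=
        Finset.sum_le_sum_of_subset hsub
    _ = ∑ d ∈ n.divisors, ∑ p ∈ Mdeg Fq d, p.natDegree := Finset.sum_biUnion hdisj
    _ = ∑ d ∈ n.divisors, d * (Mdeg Fq d).card := by
        refine Finset.sum_congr rfl (fun d _ => ?_)
        rw [Finset.sum_congr rfl (fun p hp => (mem_Mdeg.mp hp).2.2), Finset.sum_const,
          smul_eq_mul, mul_comm]

end Count2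

lemma aux_geom_nat {b : ℕ} (hb : 2 ≤ b) (m : ℕ) :
    ∑ d ∈ Finset.Icc 1 m, b ^ d ≤ 2 * b ^ m := by
  induction m with
  | zero => simp
  | succ m ih =>
    rw [Finset.sum_Icc_succ_top (by omega)]
    have h1 : b ^ (m + 1) = b * b ^ m := by ring
    have h2 : 2 * b ^ m ≤ b * b ^ m := Nat.mul_le_mul_right _ hb
    omega

section Count3
variable {Fq : Type} [Field Fq] [Fintype Fq]

local notation "q" => Fintype.card Fq

lemma aux_lower' (n : ℕ) (hn : 0 < n) :
    q ^ n ≤ n * (Mdeg Fq n).card + 2 * q ^ (n / 2) := by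
  have h := aux_lower (Fq := Fq) n hn
  have hmem : n ∈ n.divisors := Nat.mem_divisors_self n hn.ne'
  rw [← Finset.sum_erase_add _ _ hmem] at h
  have hrest : ∑ d ∈ n.divisors.erase n, d * (Mdeg Fq d).card ≤ 2 * q ^ (n / 2) := by
    calc ∑ d ∈ n.divisors.erase n, d * (Mdeg Fq d).card
        ≤ ∑ d ∈ n.divisors.erase n, q ^ d := by
          refine Finset.sum_le_sum (fun d hd => ?_)
          have hd' := Nat.pos_of_mem_divisors (Finset.mem_of_mem_erase hd)
          exact aux_upper d hd'
      _ ≤ ∑ d ∈ Finset.Icc 1 (n / 2), q ^ d := by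
          refine Finset.sum_le_sum_of_subset (fun d hd => ?_)
          have hne := Finset.ne_of_mem_erase hd
          have hd2 := Finset.mem_of_mem_erase hd
          rw [Nat.mem_divisors] at hd2
          obtain ⟨⟨m, hm⟩, -⟩ := hd2
          have hd0 : 0 < d := Nat.pos_of_mem_divisors (Finset.mem_of_mem_erase hd)
          have hm2 : 2 ≤ m := by
            rcases Nat.lt_or_ge m 2 with hm' | hm'
            · interval_cases m <;> omega
            · exact hm'
          refine Finset.mem_Icc.mpr ⟨hd0, ?_⟩
          have : d * 2 ≤ n := by
            calc d * 2 ≤ d * m := Nat.mul_le_mul_left _ hm2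
              _ = n := hm.symm
          omega
      _ ≤ 2 * q ^ (n / 2) := aux_geom_nat Fintype.one_lt_card _
  omega

end Count3

theorem stmt8 : ∃ C : ℝ, 0 < C ∧
    ∀ (Fq : Type) [Field Fq] [Fintype Fq], ∀ k : ℕ, 0 < k →
      |(k : ℝ) - ∑ᶠ p ∈ {p : Polynomial Fq | p.Monic ∧ Irreducible p ∧ p.natDegree ≤ k},
          ((p.natDegree : ℝ) / (Fintype.card Fq : ℝ) ^ p.natDegree)| ≤
        C * (Fintype.card Fq : ℝ) ^ (-(1 : ℝ) / 2) := by
  classical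
  refine ⟨8, by norm_num, ?_⟩
  intro Fq _ _ k hk
  set q : ℕ := Fintype.card Fq with hqdef
  have hq2 : 2 ≤ q := Fintype.one_lt_card
  have hqR : (2 : ℝ) ≤ (q : ℝ) := by exact_mod_cast hq2
  have hq0 : (0 : ℝ) < (q : ℝ) := by linarith
  set x : ℝ := (q : ℝ) ^ (-(1 : ℝ) / 2) with hxdef
  have hx0 : 0 < x := Real.rpow_pos_of_pos hq0 _
  have hxsq : x ^ 2 = (q : ℝ)⁻¹ := by
    rw [hxdef, ← Real.rpow_natCast ((q : ℝ) ^ (-(1 : ℝ) / 2)) 2, ← Real.rpow_mul hq0.le]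
    norm_num
    exact (Real.rpow_neg_one _) |>.trans rfl
  have hx34 : x ≤ 3 / 4 := by
    have hqi : (q : ℝ)⁻¹ ≤ 1 / 2 := by
      rw [inv_le_comm₀ (by linarith) (by norm_num)]
      simpa using hqR
    nlinarith [hx0.le]
  -- the finsum equals a finite double sum
  have hSset : {p : Polynomial Fq | p.Monic ∧ Irreducible p ∧ p.natDegree ≤ k} =
      ↑((Finset.Icc 1 k).biUnion (Mdeg Fq)) := by
    ext p
    simp only [Set.mem_setOf_eq, Finset.coe_biUnion, Set.mem_iUnion, Finset.mem_coe,
      Finset.mem_Icc, mem_Mdeg]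
    constructor
    · rintro ⟨hm, hi, hle⟩
      exact ⟨p.natDegree, ⟨hi.natDegree_pos, hle⟩, hm, hi, rfl⟩
    · rintro ⟨n, ⟨h1, h2⟩, hm, hi, rfl⟩
      exact ⟨hm, hi, h2⟩
  have hdisj : ∀ d ∈ Finset.Icc 1 k, ∀ e ∈ Finset.Icc 1 k, d ≠ e →
      Disjoint (Mdeg Fq d) (Mdeg Fq e) := by
    intro d _ e _ hde
    refine Finset.disjoint_left.mpr (fun p hp hp' => hde ?_)
    rw [← (mem_Mdeg.mp hp).2.2, ← (mem_Mdeg.mp hp').2.2]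
  have hfinsum : (∑ᶠ p ∈ {p : Polynomial Fq | p.Monic ∧ Irreducible p ∧ p.natDegree ≤ k},
        ((p.natDegree : ℝ) / (q : ℝ) ^ p.natDegree)) =
      ∑ n ∈ Finset.Icc 1 k, ((Mdeg Fq n).card : ℝ) * ((n : ℝ) / (q : ℝ) ^ n) := by
    rw [hSset, finsum_mem_coe_finset, Finset.sum_biUnion hdisj]
    refine Finset.sum_congr rfl (fun n _ => ?_)
    rw [Finset.sum_congr rfl (fun p hp => by rw [(mem_Mdeg.mp hp).2.2]), Finset.sum_const,
      nsmul_eq_mul]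
  rw [hfinsum]
  -- termwise bounds
  have hterm : ∀ n ∈ Finset.Icc 1 k,
      0 ≤ 1 - ((Mdeg Fq n).card : ℝ) * ((n : ℝ) / (q : ℝ) ^ n) ∧
      1 - ((Mdeg Fq n).card : ℝ) * ((n : ℝ) / (q : ℝ) ^ n) ≤ 2 * x ^ n := by
    intro n hn
    rw [Finset.mem_Icc] at hn
    have hn1 : 0 < n := hn.1
    have hqn0 : (0 : ℝ) < (q : ℝ) ^ n := pow_pos hq0 n
    have hup : ((n : ℝ) * ((Mdeg Fq n).card : ℝ)) ≤ (q : ℝ) ^ n := by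
      exact_mod_cast aux_upper (Fq := Fq) n hn1
    have hlo : ((q : ℝ) ^ n) ≤ (n : ℝ) * ((Mdeg Fq n).card : ℝ) + 2 * (q : ℝ) ^ (n / 2 : ℕ) := by
      exact_mod_cast aux_lower' (Fq := Fq) n hn1
    have hxn : (q : ℝ) ^ (n / 2 : ℕ) ≤ x ^ n * (q : ℝ) ^ n := by
      have h1 : x ^ n * (q : ℝ) ^ n = (q : ℝ) ^ ((-(1 : ℝ) / 2) * n + n) := by
        rw [Real.rpow_add hq0, hxdef, ← Real.rpow_natCast ((q : ℝ) ^ (-(1 : ℝ) / 2)) n,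
          ← Real.rpow_mul hq0.le, Real.rpow_natCast]
      have h2 : (q : ℝ) ^ (n / 2 : ℕ) = (q : ℝ) ^ (((n / 2 : ℕ) : ℝ)) := by
        rw [Real.rpow_natCast]
      rw [h1, h2]
      refine Real.rpow_le_rpow_of_exponent_le (by linarith) ?_
      have h3 : ((n / 2 : ℕ) : ℝ) ≤ (n : ℝ) / 2 := Nat.cast_div_le
      linarith
    constructor
    · rw [sub_nonneg, mul_comm, div_mul_eq_mul_div, div_le_one hqn0]
      exact hup
    · rw [mul_comm, div_mul_eq_mul_div, sub_div' hqn0.ne', div_le_iff₀ hqn0]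
      calc 1 * (q : ℝ) ^ n - (n : ℝ) * ((Mdeg Fq n).card : ℝ)
            = (q : ℝ) ^ n - (n : ℝ) * ((Mdeg Fq n).card : ℝ) := by ring
        _ ≤ 2 * (q : ℝ) ^ (n / 2 : ℕ) := by linarith
        _ ≤ 2 * (x ^ n * (q : ℝ) ^ n) := by linarith [hxn]
        _ = 2 * x ^ n * (q : ℝ) ^ n := by ring
  -- rewrite k as a sum of ones
  have hkcard : (k : ℝ) = ∑ n ∈ Finset.Icc 1 k, (1 : ℝ) := by
    rw [Finset.sum_const, Nat.card_Icc, nsmul_eq_mul, mul_one]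
    norm_num
  rw [hkcard, ← Finset.sum_sub_distrib]
  have hnonneg : 0 ≤ ∑ n ∈ Finset.Icc 1 k,
      ((1 : ℝ) - ((Mdeg Fq n).card : ℝ) * ((n : ℝ) / (q : ℝ) ^ n)) :=
    Finset.sum_nonneg (fun n hn => (hterm n hn).1)
  rw [abs_of_nonneg hnonneg]
  -- geometric bound
  have hgeom : ∑ n ∈ Finset.Icc 1 k, x ^ n ≤ 4 * x := by
    have hgs : ∑ j ∈ Finset.range k, x ^ j ≤ 4 := by
      have hmul : (∑ j ∈ Finset.range k, x ^ j) * (x - 1) = x ^ k - 1 := geom_sum_mul x k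
      have hxk : 0 ≤ x ^ k := pow_nonneg hx0.le k
      have hsn : 0 ≤ ∑ j ∈ Finset.range k, x ^ j :=
        Finset.sum_nonneg (fun j _ => pow_nonneg hx0.le j)
      nlinarith
    have hId : ∑ n ∈ Finset.Icc 1 k, x ^ n = x * ∑ j ∈ Finset.range k, x ^ j := by
      rw [Finset.mul_sum]
      rw [← Finset.Ico_add_one_right_eq_Icc, Finset.sum_Ico_eq_sum_range]
      simp only [Nat.add_sub_cancel, Nat.succ_sub_one]
      refine Finset.sum_congr rfl (fun j _ => ?_)
      rw [pow_add, pow_one]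
    rw [hId]
    calc x * ∑ j ∈ Finset.range k, x ^ j ≤ x * 4 := by
          exact mul_le_mul_of_nonneg_left hgs hx0.le
      _ = 4 * x := by ring
  calc ∑ n ∈ Finset.Icc 1 k, ((1 : ℝ) - ((Mdeg Fq n).card : ℝ) * ((n : ℝ) / (q : ℝ) ^ n))
      ≤ ∑ n ∈ Finset.Icc 1 k, 2 * x ^ n := Finset.sum_le_sum (fun n hn => (hterm n hn).2)
    _ = 2 * ∑ n ∈ Finset.Icc 1 k, x ^ n := by rw [Finset.mul_sum]
    _ ≤ 2 * (4 * x) := by linarith [hgeom]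
    _ = 8 * x := by ring
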